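/- Assume the system is q-eigenvalue observable with s ≤ q ≤ 2s, and the data Y_1,…,Y_p are generated under at most s attacks from some x_true. Let Λ ⊆ {1,…,r} and define X_Λ = { Σ_{j∈Λ} x_j : x_j ∈ X_j for each j ∈ Λ, and |∪_{j∈Λ} I_j(x_j)| ≤ s }. Then X_Λ and each X_j are nonempty finite sets, and for every row vector κ ∈ ℝ^{1×n} and every plausible state x: κ x ≤ Σ_{j∉Λ} max_{x_j ∈ X_j} κ x_j + max_{x_Λ ∈ X_Λ} κ x_Λ ≤ Σ_{j=1}^r max_{x_j ∈ X_j} κ x_j. (Proposition 3: the partial-combination bound M̄_Λ satisfies M̄ ≥ M̄_Λ ≥ M(Y).) -/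

import Mathlib

open Matrix

noncomputable section

/-- Generalized eigenspace of `A` for the eigenvalue `μ`: `ker((A - μ I)^n)`. -/
def genEig {n : ℕ} (A : Matrix (Fin n) (Fin n) ℝ) (μ : ℝ) : Set (Fin n → ℝ) :=
  {x | ((A - μ • 1) ^ n).mulVec x = 0}

/-- Observability map of sensor `i` over horizon `t`: `(𝒪_i x)_τ = C_i A^τ x`. -/
def obsMap {n p : ℕ} (t : ℕ) (A : Matrix (Fin n) (Fin n) ℝ)
    (C : Matrix (Fin p) (Fin n) ℝ) (i : Fin p) (x : Fin n → ℝ) : Fin (t + 1) → ℝ :=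
  fun τ => ((C * A ^ (τ : ℕ)).mulVec x) i

/-- `x` is a plausible state for the data `Y`: some set `Γ` of `p - s` sensors is
exactly explained by `x`. -/
def plausible {n p : ℕ} (t : ℕ) (A : Matrix (Fin n) (Fin n) ℝ)
    (C : Matrix (Fin p) (Fin n) ℝ) (s : ℕ) (Y : Fin p → Fin (t + 1) → ℝ)
    (x : Fin n → ℝ) : Prop :=
  ∃ Γ : Finset (Fin p), Γ.card = p - s ∧ ∀ i ∈ Γ, obsMap t A C i x = Y i

/-- The eigenvalue `μ` of `A` is observable with respect to sensor `i` (over `ℂ`). -/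
def eigObs {n p : ℕ} (A : Matrix (Fin n) (Fin n) ℝ)
    (C : Matrix (Fin p) (Fin n) ℝ) (μ : ℝ) (i : Fin p) : Prop :=
  ∀ v : Fin n → ℂ, (A.map Complex.ofReal).mulVec v = (μ : ℂ) • v →
    ((C.map Complex.ofReal).mulVec v) i = 0 → v = 0

/-- The substate `xj ∈ V^j` agrees with sensor `i`: some choice of substates in the
other generalized eigenspaces makes the total response match the data `Y i`. -/
def agrees {n p r : ℕ} (t : ℕ) (A : Matrix (Fin n) (Fin n) ℝ)
    (C : Matrix (Fin p) (Fin n) ℝ) (lam : Fin r → ℝ)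
    (Y : Fin p → Fin (t + 1) → ℝ) (j : Fin r) (xj : Fin n → ℝ) (i : Fin p) : Prop :=
  ∃ z : Fin r → Fin n → ℝ, (∀ k, k ≠ j → z k ∈ genEig A (lam k)) ∧
    obsMap t A C i (xj + ∑ k ∈ Finset.univ.erase j, z k) = Y i

/-- `X_j`: the substates in `V^j` that agree with at least `q + 1 - s` sensors for
which `λ_j` is observable. -/
def Xset {n p r : ℕ} (t : ℕ) (A : Matrix (Fin n) (Fin n) ℝ)
    (C : Matrix (Fin p) (Fin n) ℝ) (lam : Fin r → ℝ)
    (Y : Fin p → Fin (t + 1) → ℝ) (s q : ℕ) (j : Fin r) : Set (Fin n → ℝ) :=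
  {xj | xj ∈ genEig A (lam j) ∧
    q + 1 - s ≤ {i : Fin p | eigObs A C (lam j) i ∧ agrees t A C lam Y j xj i}.ncard}

/-- `I_j(xj)`: the sensors that do not agree with the substate `xj`. -/
def Iset {n p r : ℕ} (t : ℕ) (A : Matrix (Fin n) (Fin n) ℝ)
    (C : Matrix (Fin p) (Fin n) ℝ) (lam : Fin r → ℝ)
    (Y : Fin p → Fin (t + 1) → ℝ) (j : Fin r) (xj : Fin n → ℝ) : Set (Fin p) :=
  {i | ¬ agrees t A C lam Y j xj i}

/-- `X_Λ`: sums over `j ∈ Λ` of substates `x_j ∈ X_j` whose disagreeing sensor sets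
jointly have cardinality at most `s`. -/
def XLam {n p r : ℕ} (t : ℕ) (A : Matrix (Fin n) (Fin n) ℝ)
    (C : Matrix (Fin p) (Fin n) ℝ) (lam : Fin r → ℝ)
    (Y : Fin p → Fin (t + 1) → ℝ) (s q : ℕ) (L : Finset (Fin r)) : Set (Fin n → ℝ) :=
  {xL | ∃ v : Fin r → Fin n → ℝ, (∀ j ∈ L, v j ∈ Xset t A C lam Y s q j) ∧
    (⋃ j ∈ L, Iset t A C lam Y j (v j)).ncard ≤ s ∧ xL = ∑ j ∈ L, v j}

open Polynomial in
lemma mul_sum_mulVec {n p : ℕ} {ι : Type*} (C : Matrix (Fin p) (Fin n) ℝ)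
    (w : Fin n → ℝ) (i : Fin p) (s : Finset ι) (g : ι → Matrix (Fin n) (Fin n) ℝ) :
    ((C * ∑ k ∈ s, g k) *ᵥ w) i = ∑ k ∈ s, ((C * g k) *ᵥ w) i := by
  induction s using Finset.cons_induction with
  | empty => simp
  | cons a s ha ih => simp [Finset.sum_cons, Matrix.mul_add, Matrix.add_mulVec, ih]

lemma mulVec_sum_vec {n m : ℕ} {ι : Type*} (M : Matrix (Fin m) (Fin n) ℝ)
    (s : Finset ι) (g : ι → Fin n → ℝ) :
    M *ᵥ (∑ k ∈ s, g k) = ∑ k ∈ s, M *ᵥ g k := by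
  induction s using Finset.cons_induction with
  | empty => simp
  | cons a s ha ih => simp [Finset.sum_cons, Matrix.mulVec_add, ih]

lemma dot_sum_vec {n : ℕ} {ι : Type*} (κ : Fin n → ℝ) (s : Finset ι) (g : ι → Fin n → ℝ) :
    κ ⬝ᵥ (∑ k ∈ s, g k) = ∑ k ∈ s, κ ⬝ᵥ g k := by
  induction s using Finset.cons_induction with
  | empty => simp
  | cons a s ha ih => simp [Finset.sum_cons, dotProduct_add, ih]

open Polynomial in
lemma psi_lin {n p : ℕ} (A : Matrix (Fin n) (Fin n) ℝ) (C : Matrix (Fin p) (Fin n) ℝ)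
    (w : Fin n → ℝ) (i : Fin p) (b : ℕ)
    (h : ∀ m ≤ b, ((C * A ^ m) *ᵥ w) i = 0) (f : ℝ[X]) (hf : f.natDegree ≤ b) :
    ((C * aeval A f) *ᵥ w) i = 0 := by
  have hrw := aeval_eq_sum_range' (p := f) (n := b+1) (Nat.lt_succ_of_le hf) A
  rw [hrw, mul_sum_mulVec]
  refine Finset.sum_eq_zero fun m hm => ?_
  have := h m (by simp at hm; omega)
  simp [Matrix.mul_smul, Matrix.smul_mulVec, this]

open Polynomial in
lemma phi_all {n p t : ℕ} (ht : n - 1 ≤ t) (A : Matrix (Fin n) (Fin n) ℝ)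
    (C : Matrix (Fin p) (Fin n) ℝ) (w : Fin n → ℝ) (i : Fin p)
    (h : ∀ τ : Fin (t + 1), ((C * A ^ (τ : ℕ)) *ᵥ w) i = 0) (f : ℝ[X]) :
    ((C * aeval A f) *ᵥ w) i = 0 := by
  have hb : ∀ m ≤ t, ((C * A ^ m) *ᵥ w) i = 0 := fun m hm => h ⟨m, by omega⟩
  have hall : ∀ m : ℕ, ((C * A ^ m) *ᵥ w) i = 0 := by
    intro m
    by_cases hn : n = 0
    · subst hn; simp [Matrix.mulVec, dotProduct]
    · have hmon := A.charpoly_monic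
      have hdiv := Polynomial.modByMonic_add_div (X ^ m : ℝ[X]) A.charpoly
      have hdeg : ((X ^ m : ℝ[X]) %ₘ A.charpoly).natDegree < A.charpoly.natDegree := by
        refine Polynomial.natDegree_modByMonic_lt _ hmon ?_
        intro h1
        have h2 := A.charpoly_natDegree_eq_dim
        rw [h1] at h2
        simp [Fintype.card_fin] at h2
        omega
      rw [A.charpoly_natDegree_eq_dim, Fintype.card_fin] at hdeg
      have hA : (A : Matrix (Fin n) (Fin n) ℝ) ^ m
          = aeval A ((X ^ m : ℝ[X]) %ₘ A.charpoly) := by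
        have h3 := congrArg (aeval A) hdiv
        rw [map_add, _root_.map_mul, Matrix.aeval_self_charpoly, zero_mul, add_zero] at h3
        rw [h3]; simp
      rw [hA]
      exact psi_lin A C w i t hb _ (by omega)
  exact psi_lin A C w i f.natDegree (fun m _ => hall m) f le_rfl

lemma genEig_sub {n : ℕ} {A : Matrix (Fin n) (Fin n) ℝ} {μ : ℝ} {x y : Fin n → ℝ}
    (hx : x ∈ genEig A μ) (hy : y ∈ genEig A μ) : x - y ∈ genEig A μ := by
  simp only [genEig, Set.mem_setOf_eq] at *
  rw [Matrix.mulVec_sub, hx, hy, sub_zero]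

open Polynomial in
lemma aeval_pow_sub {n : ℕ} (A : Matrix (Fin n) (Fin n) ℝ) (μ : ℝ) (m : ℕ) :
    aeval A ((X - C μ) ^ m : ℝ[X]) = (A - μ • 1) ^ m := by
  rw [map_pow, map_sub, aeval_X, aeval_C, Algebra.algebraMap_eq_smul_one]

open Polynomial in
lemma aeval_dvd_mulVec_zero {n : ℕ} {A : Matrix (Fin n) (Fin n) ℝ} {μ : ℝ}
    {u : Fin n → ℝ} (hu : u ∈ genEig A μ) {f : ℝ[X]}
    (hdvd : ((X - C μ) ^ n : ℝ[X]) ∣ f) : (aeval A f) *ᵥ u = 0 := by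
  obtain ⟨g, hg⟩ := hdvd
  have hu' : ((A - μ • 1) ^ n) *ᵥ u = 0 := hu
  rw [hg, mul_comm, _root_.map_mul, aeval_pow_sub, ← Matrix.mulVec_mulVec, hu',
    Matrix.mulVec_zero]

open Polynomial in
lemma exists_selector {n r : ℕ} (lam : Fin r → ℝ) (hlam : Function.Injective lam) (j : Fin r) :
    ∃ f : ℝ[X], (∀ k, k ≠ j → ((X - C (lam k)) ^ n : ℝ[X]) ∣ f) ∧
      ((X - C (lam j)) ^ n : ℝ[X]) ∣ (1 - f) := by
  have hco : IsCoprime (∏ k ∈ Finset.univ.erase j, ((X - C (lam k)) ^ n : ℝ[X]))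
      (((X - C (lam j)) ^ n : ℝ[X])) := by
    refine IsCoprime.prod_left fun k hk => ?_
    exact (Polynomial.pairwise_coprime_X_sub_C hlam (Finset.mem_erase.mp hk).1).pow
  obtain ⟨a, b, hab⟩ := hco
  refine ⟨a * ∏ k ∈ Finset.univ.erase j, ((X - C (lam k)) ^ n : ℝ[X]), ?_, ?_⟩
  · intro k hk
    exact Dvd.dvd.mul_left
      (Finset.dvd_prod_of_mem _ (Finset.mem_erase.mpr ⟨hk, Finset.mem_univ k⟩)) a
  · exact ⟨b, by linear_combination -hab⟩

open Polynomial in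
lemma selector_sum {n r : ℕ} {A : Matrix (Fin n) (Fin n) ℝ} {lam : Fin r → ℝ}
    {j : Fin r} {f : ℝ[X]}
    (hf1 : ∀ k, k ≠ j → ((X - C (lam k)) ^ n : ℝ[X]) ∣ f)
    (hf2 : ((X - C (lam j)) ^ n : ℝ[X]) ∣ (1 - f))
    (z : Fin r → Fin n → ℝ) (hz : ∀ k, z k ∈ genEig A (lam k)) :
    (aeval A f) *ᵥ (∑ k, z k) = z j := by
  rw [mulVec_sum_vec]
  rw [Finset.sum_eq_single_of_mem j (Finset.mem_univ j)]
  · have h1 : (aeval A (1 - f)) *ᵥ (z j) = 0 := aeval_dvd_mulVec_zero (hz j) hf2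
    rw [map_sub, _root_.map_one, Matrix.sub_mulVec, Matrix.one_mulVec] at h1
    have h2 := sub_eq_zero.mp h1
    exact h2.symm
  · intro k _ hk
    exact aeval_dvd_mulVec_zero (hz k) (hf1 k hk)

open Polynomial in
lemma pbh {n p : ℕ} {A : Matrix (Fin n) (Fin n) ℝ} {C : Matrix (Fin p) (Fin n) ℝ}
    {μ : ℝ} {i : Fin p} (hobs : eigObs A C μ i) {w : Fin n → ℝ}
    (hw : w ∈ genEig A μ)
    (h : ∀ g : ℝ[X], ((C * aeval A g) *ᵥ w) i = 0) : w = 0 := by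
  have hQ : ∃ m, ((A - μ • 1) ^ m) *ᵥ w = 0 := ⟨n, hw⟩
  by_contra hwne
  have hfind := Nat.find_spec hQ
  rcases Nat.eq_zero_or_pos (Nat.find hQ) with h0 | hpos
  · rw [h0, pow_zero, Matrix.one_mulVec] at hfind; exact hwne hfind
  · set m' := Nat.find hQ - 1 with hm'
    have hne : ¬ (((A - μ • 1) ^ m') *ᵥ w = 0) := Nat.find_min hQ (by omega)
    set v := ((A - μ • 1) ^ m') *ᵥ w with hv
    have hstep : (A - μ • 1) *ᵥ v = 0 := by
      rw [hv, Matrix.mulVec_mulVec, ← pow_succ']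
      have hmeq : m' + 1 = Nat.find hQ := by omega
      rw [hmeq]; exact hfind
    have hAv : A *ᵥ v = μ • v := by
      rw [Matrix.sub_mulVec, Matrix.smul_mulVec, Matrix.one_mulVec] at hstep
      exact sub_eq_zero.mp hstep
    have hCv : (C *ᵥ v) i = 0 := by
      have h4 := h ((X - Polynomial.C μ) ^ m')
      rw [hv, Matrix.mulVec_mulVec, ← aeval_pow_sub A μ m']
      exact h4
    have h1 : (A.map Complex.ofReal) *ᵥ (fun k => (v k : ℂ))
        = (μ : ℂ) • (fun k => (v k : ℂ)) := by
      funext k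
      have h5 := congrFun hAv k
      simp only [Matrix.mulVec, dotProduct, Pi.smul_apply, smul_eq_mul] at h5 ⊢
      simp only [Matrix.map_apply]
      push_cast
      exact_mod_cast congrArg (fun x : ℝ => (x : ℂ)) h5
    have h2 : ((C.map Complex.ofReal) *ᵥ (fun k => (v k : ℂ))) i = 0 := by
      simp only [Matrix.mulVec, dotProduct, Matrix.map_apply] at hCv ⊢
      exact_mod_cast congrArg (fun x : ℝ => (x : ℂ)) hCv
    have h3 := hobs _ h1 h2
    refine hne (funext fun k => ?_)
    have h6 : ((v k : ℂ)) = 0 := by simpa using congrFun h3 k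
    exact_mod_cast h6

lemma agree_unique {n p r t : ℕ} (ht : n - 1 ≤ t) {A : Matrix (Fin n) (Fin n) ℝ}
    {C : Matrix (Fin p) (Fin n) ℝ} {lam : Fin r → ℝ} {Y : Fin p → Fin (t + 1) → ℝ}
    (hlam : Function.Injective lam) {j : Fin r} {i : Fin p}
    (hobs : eigObs A C (lam j) i) {xj xj' : Fin n → ℝ}
    (hx : xj ∈ genEig A (lam j)) (hx' : xj' ∈ genEig A (lam j))
    (ha : agrees t A C lam Y j xj i) (ha' : agrees t A C lam Y j xj' i) : xj = xj' := by
  classical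
  obtain ⟨z, hz, hzy⟩ := ha
  obtain ⟨z', hz', hzy'⟩ := ha'
  set u : Fin r → Fin n → ℝ :=
    fun k => if k = j then xj - xj' else z k - z' k with hu_def
  have hu : ∀ k, u k ∈ genEig A (lam k) := by
    intro k
    by_cases hk : k = j
    · subst hk; simp only [hu_def, if_pos rfl]; exact genEig_sub hx hx'
    · simp only [hu_def, if_neg hk]; exact genEig_sub (hz k hk) (hz' k hk)
  set w : Fin n → ℝ := ∑ k, u k with hw_def
  have hw_eq : w = (xj + ∑ k ∈ Finset.univ.erase j, z k)
      - (xj' + ∑ k ∈ Finset.univ.erase j, z' k) := by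
    have hsum : ∑ k ∈ Finset.univ.erase j, u k
        = (∑ k ∈ Finset.univ.erase j, z k) - (∑ k ∈ Finset.univ.erase j, z' k) := by
      rw [← Finset.sum_sub_distrib]
      exact Finset.sum_congr rfl fun k hk => by
        simp only [hu_def, if_neg (Finset.mem_erase.mp hk).1]
    rw [hw_def, ← Finset.add_sum_erase _ u (Finset.mem_univ j), hsum]
    simp only [hu_def, if_pos rfl]
    abel
  have h0 : ∀ τ : Fin (t + 1), ((C * A ^ (τ : ℕ)) *ᵥ w) i = 0 := by
    intro τ
    have e1 := congrFun hzy τ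
    have e2 := congrFun hzy' τ
    simp only [obsMap] at e1 e2
    rw [hw_eq, Matrix.mulVec_sub]
    simp only [Pi.sub_apply]
    rw [e1, e2, sub_self]
  obtain ⟨f, hf1, hf2⟩ := exists_selector (n := n) lam hlam j
  have huj : xj - xj' = (Polynomial.aeval A f) *ᵥ w := by
    rw [hw_def, selector_sum hf1 hf2 u hu]
    simp [hu_def]
  have hpoly : ∀ g : Polynomial ℝ, ((C * Polynomial.aeval A g) *ᵥ (xj - xj')) i = 0 := by
    intro g
    rw [huj, Matrix.mulVec_mulVec, Matrix.mul_assoc, ← _root_.map_mul]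
    exact phi_all ht A C w i h0 (g * f)
  have := pbh hobs (genEig_sub hx hx') hpoly
  exact sub_eq_zero.mp this

/-- Proposition 3: the partial-combination bound is sandwiched between
the exact maximum over plausible states and the fully decomposed bound. -/
theorem partial_combination_bound
    {n p r s q t : ℕ} (hsp : s ≤ p) (hsq : s ≤ q) (hq2s : q ≤ 2 * s) (ht : n - 1 ≤ t)
    (A : Matrix (Fin n) (Fin n) ℝ) (C : Matrix (Fin p) (Fin n) ℝ)
    (lam : Fin r → ℝ) (hlam : Function.Injective lam)
    (heig : ∀ j, ∃ w : Fin n → ℝ, w ≠ 0 ∧ A.mulVec w = lam j • w)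
    (P : Fin r → Matrix (Fin n) (Fin n) ℝ)
    (hPmem : ∀ j, ∀ x : Fin n → ℝ, (P j).mulVec x ∈ genEig A (lam j))
    (hPsum : ∀ x : Fin n → ℝ, ∑ j, (P j).mulVec x = x)
    (Y : Fin p → Fin (t + 1) → ℝ) (xtrue : Fin n → ℝ)
    (ΛA : Finset (Fin p)) (hΛA : ΛA.card ≤ s)
    (hdata : ∀ i ∉ ΛA, Y i = obsMap t A C i xtrue)
    (hqobs : ∀ j, q + 1 ≤ {i : Fin p | eigObs A C (lam j) i}.ncard)
    (L : Finset (Fin r)) :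
    ((XLam t A C lam Y s q L).Finite ∧ (XLam t A C lam Y s q L).Nonempty) ∧
    (∀ j, (Xset t A C lam Y s q j).Finite ∧ (Xset t A C lam Y s q j).Nonempty) ∧
    (∀ κ : Fin n → ℝ, ∀ x : Fin n → ℝ, plausible t A C s Y x →
      κ ⬝ᵥ x ≤ (∑ j ∈ Lᶜ, sSup ((fun xj => κ ⬝ᵥ xj) '' Xset t A C lam Y s q j))
            + sSup ((fun xL => κ ⬝ᵥ xL) '' XLam t A C lam Y s q L) ∧
      (∑ j ∈ Lᶜ, sSup ((fun xj => κ ⬝ᵥ xj) '' Xset t A C lam Y s q j))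
            + sSup ((fun xL => κ ⬝ᵥ xL) '' XLam t A C lam Y s q L)
        ≤ ∑ j, sSup ((fun xj => κ ⬝ᵥ xj) '' Xset t A C lam Y s q j)) := by
  classical
  -- any state fitting sensor i gives agreement of all its components with i
  have hagree_of_fit : ∀ (x : Fin n → ℝ) (i : Fin p), obsMap t A C i x = Y i →
      ∀ j, agrees t A C lam Y j ((P j) *ᵥ x) i := by
    intro x i hfit j
    refine ⟨fun k => (P k) *ᵥ x, fun k _ => hPmem k x, ?_⟩
    have hsum : (P j) *ᵥ x + ∑ k ∈ Finset.univ.erase j, (P k) *ᵥ x = x :=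
      (Finset.add_sum_erase _ (fun k => (P k) *ᵥ x) (Finset.mem_univ j)).trans (hPsum x)
    rw [hsum]; exact hfit
  have hmemX : ∀ (x : Fin n → ℝ) (Γ : Finset (Fin p)), p - s ≤ Γ.card →
      (∀ i ∈ Γ, obsMap t A C i x = Y i) →
      ∀ j, (P j) *ᵥ x ∈ Xset t A C lam Y s q j := by
    intro x Γ hΓ hfit j
    refine ⟨hPmem j x, ?_⟩
    have hsub : {i : Fin p | eigObs A C (lam j) i} ∩ ↑Γ ⊆
        {i : Fin p | eigObs A C (lam j) i ∧ agrees t A C lam Y j ((P j) *ᵥ x) i} := by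
      rintro i ⟨h1, h2⟩
      exact ⟨h1, hagree_of_fit x i (hfit i h2) j⟩
    have hle := Set.ncard_le_ncard hsub (Set.toFinite _)
    have h1 := Set.ncard_union_add_ncard_inter {i : Fin p | eigObs A C (lam j) i}
      (↑Γ : Set (Fin p)) (Set.toFinite _) (Set.toFinite _)
    have h2 : ({i : Fin p | eigObs A C (lam j) i} ∪ ↑Γ).ncard ≤ p := by
      have h3 := Set.ncard_le_ncard (Set.subset_univ
        ({i : Fin p | eigObs A C (lam j) i} ∪ ↑Γ)) (Set.toFinite _)
      simpa [Set.ncard_univ] using h3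
    rw [Set.ncard_coe_finset] at h1
    have hq := hqobs j
    omega
  have hmemXL : ∀ (x : Fin n → ℝ) (Γ : Finset (Fin p)), p - s ≤ Γ.card → Γᶜ.card ≤ s →
      (∀ i ∈ Γ, obsMap t A C i x = Y i) →
      (∑ j ∈ L, (P j) *ᵥ x) ∈ XLam t A C lam Y s q L := by
    intro x Γ hΓ hΓc hfit
    refine ⟨fun j => (P j) *ᵥ x, fun j _ => hmemX x Γ hΓ hfit j, ?_, rfl⟩
    have hsub : (⋃ j ∈ L, Iset t A C lam Y j ((P j) *ᵥ x)) ⊆ ↑(Γᶜ) := by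
      intro i hi
      simp only [Set.mem_iUnion] at hi
      obtain ⟨j, _, hIj⟩ := hi
      simp only [Finset.coe_compl, Set.mem_compl_iff, Finset.mem_coe]
      intro hiΓ
      exact hIj (hagree_of_fit x i (hfit i hiΓ) j)
    calc (⋃ j ∈ L, Iset t A C lam Y j ((P j) *ᵥ x)).ncard
        ≤ (↑(Γᶜ) : Set (Fin p)).ncard := Set.ncard_le_ncard hsub (Set.toFinite _)
      _ = Γᶜ.card := Set.ncard_coe_finset _
      _ ≤ s := hΓc
  have hxtrueX : ∀ j, (P j) *ᵥ xtrue ∈ Xset t A C lam Y s q j := by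
    intro j
    refine hmemX xtrue ΛAᶜ ?_ ?_ j
    · rw [Finset.card_compl, Fintype.card_fin]; omega
    · intro i hi
      exact (hdata i (Finset.mem_compl.mp hi)).symm
  have hxtrueXL : (∑ j ∈ L, (P j) *ᵥ xtrue) ∈ XLam t A C lam Y s q L := by
    refine hmemXL xtrue ΛAᶜ ?_ ?_ ?_
    · rw [Finset.card_compl, Fintype.card_fin]; omega
    · rw [compl_compl]; exact hΛA
    · intro i hi
      exact (hdata i (Finset.mem_compl.mp hi)).symm
  have hXfin : ∀ j, (Xset t A C lam Y s q j).Finite := by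
    intro j
    have hsub : Xset t A C lam Y s q j ⊆ ⋃ i : Fin p,
        {xj | xj ∈ genEig A (lam j) ∧ eigObs A C (lam j) i
          ∧ agrees t A C lam Y j xj i} := by
      rintro xj ⟨hgen, hcard⟩
      have hpos : {i : Fin p | eigObs A C (lam j) i
          ∧ agrees t A C lam Y j xj i}.ncard ≠ 0 := by omega
      obtain ⟨i, hi⟩ := Set.nonempty_of_ncard_ne_zero hpos
      exact Set.mem_iUnion.mpr ⟨i, hgen, hi.1, hi.2⟩
    refine Set.Finite.subset (Set.finite_iUnion fun i => ?_) hsub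
    apply Set.Subsingleton.finite
    rintro a ⟨ha1, ha2, ha3⟩ b ⟨hb1, hb2, hb3⟩
    exact agree_unique ht hlam ha2 ha1 hb1 ha3 hb3
  have hXLfin : (XLam t A C lam Y s q L).Finite := by
    have hsub : XLam t A C lam Y s q L ⊆
        (fun v : Fin r → Fin n → ℝ => ∑ j ∈ L, v j) ''
          (Set.pi Set.univ fun j => insert (0 : Fin n → ℝ) (Xset t A C lam Y s q j)) := by
      rintro xL ⟨v, hv, _, rfl⟩
      refine ⟨fun j => if j ∈ L then v j else 0, ?_, ?_⟩
      · intro j _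
        by_cases hj : j ∈ L
        · simp only [if_pos hj]
          exact Set.mem_insert_of_mem _ (hv j hj)
        · simp only [if_neg hj]
          exact Set.mem_insert _ _
      · exact (Finset.sum_congr rfl fun j hj => by simp [hj]).symm
    exact Set.Finite.subset
      (Set.Finite.image _ (Set.Finite.pi fun j => (hXfin j).insert 0)) hsub
  refine ⟨⟨hXLfin, ⟨_, hxtrueXL⟩⟩, fun j => ⟨hXfin j, ⟨_, hxtrueX j⟩⟩, ?_⟩
  intro κ x hx
  have hbound : ∀ j, ∀ v ∈ Xset t A C lam Y s q j,
      κ ⬝ᵥ v ≤ sSup ((fun xj => κ ⬝ᵥ xj) '' Xset t A C lam Y s q j) := by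
    intro j v hv
    exact le_csSup ((hXfin j).image _).bddAbove ⟨v, hv, rfl⟩
  have hboundL : ∀ xL ∈ XLam t A C lam Y s q L,
      κ ⬝ᵥ xL ≤ sSup ((fun xL => κ ⬝ᵥ xL) '' XLam t A C lam Y s q L) := by
    intro xL hxL
    exact le_csSup (hXLfin.image _).bddAbove ⟨xL, hxL, rfl⟩
  obtain ⟨Γ, hΓcard, hfit⟩ := hx
  have h1 : p - s ≤ Γ.card := le_of_eq hΓcard.symm
  have h2 : Γᶜ.card ≤ s := by
    rw [Finset.card_compl, hΓcard, Fintype.card_fin]; omega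
  have hmem1 : ∀ j, (P j) *ᵥ x ∈ Xset t A C lam Y s q j := hmemX x Γ h1 hfit
  have hmem2 : (∑ j ∈ L, (P j) *ᵥ x) ∈ XLam t A C lam Y s q L := hmemXL x Γ h1 h2 hfit
  constructor
  · have hx_eq : κ ⬝ᵥ x = ∑ j, κ ⬝ᵥ ((P j) *ᵥ x) := by
      conv_lhs => rw [← hPsum x]
      exact dot_sum_vec κ Finset.univ _
    rw [hx_eq, ← Finset.sum_compl_add_sum L]
    refine add_le_add (Finset.sum_le_sum fun j _ => hbound j _ (hmem1 j)) ?_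
    rw [← dot_sum_vec]
    exact hboundL _ hmem2
  · have hL : sSup ((fun xL => κ ⬝ᵥ xL) '' XLam t A C lam Y s q L)
        ≤ ∑ j ∈ L, sSup ((fun xj => κ ⬝ᵥ xj) '' Xset t A C lam Y s q j) := by
      refine csSup_le (Set.Nonempty.image _ ⟨_, hxtrueXL⟩) ?_
      rintro y ⟨xL, ⟨v, hv, _, rfl⟩, rfl⟩
      show κ ⬝ᵥ (∑ j ∈ L, v j) ≤ _
      rw [dot_sum_vec]
      exact Finset.sum_le_sum fun j hj => hbound j _ (hv j hj)
    calc (∑ j ∈ Lᶜ, sSup ((fun xj => κ ⬝ᵥ xj) '' Xset t A C lam Y s q j))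
          + sSup ((fun xL => κ ⬝ᵥ xL) '' XLam t A C lam Y s q L)
        ≤ (∑ j ∈ Lᶜ, sSup ((fun xj => κ ⬝ᵥ xj) '' Xset t A C lam Y s q j))
          + ∑ j ∈ L, sSup ((fun xj => κ ⬝ᵥ xj) '' Xset t A C lam Y s q j) := by
          exact add_le_add_right hL _
      _ = ∑ j, sSup ((fun xj => κ ⬝ᵥ xj) '' Xset t A C lam Y s q j) :=
          Finset.sum_compl_add_sum L _
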